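/- For every ω-regular language L over the alphabet (2^{AP})ⁿ × Σⁿ there is a quantifier-free HyperPDL-Δ formula φ with path variables π₁,…,π_n such that for every trace assignment Π binding π₁,…,π_n: Π ⊨ φ if and only if ν_{AP}(Π) ∈ L. Concretely, writing L = ⋃_{i=1}^{k} L(r_{i,0}) · L(r_{i,1})^ω with regular expressions r_{i,j}, replacing each symbol ((P₁,…,P_n), τ) in r_{i,j} by the program (⋀_{l=1}^{n} (⋀_{a∈P_l} a_{π_l} ∧ ⋀_{a∉P_l} ¬a_{π_l}))? · τ yields programs α_{i,j}, and φ ≡ ⋁_{i=1}^{k} ⟨α_{i,0}⟩ Δα_{i,1} has this property. -/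

import Mathlib

/-- A trace: an infinite alternating sequence of labels (sets of atomic propositions)
and atomic programs; `lab j` is the label at step `j`, `act j` the atomic program
between steps `j` and `j+1`. -/
structure Trace (AP P : Type) where
  lab : ℕ → Set AP
  act : ℕ → P

/-- The suffix of a trace starting after `j` steps. -/
def Trace.drop {AP P : Type} (t : Trace AP P) (j : ℕ) : Trace AP P :=
  ⟨fun m => t.lab (j + m), fun m => t.act (j + m)⟩

/-- The shifted trace assignment. -/
def TAdrop {AP P : Type} {n : ℕ} (Pa : Fin n → Trace AP P) (j : ℕ) : Fin n → Trace AP P :=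
  fun l => (Pa l).drop j

mutual
/-- Quantifier-free HyperPDL-Δ formulas over `n` path variables. -/
inductive QF (AP P : Type) (n : ℕ) : Type
  | atom (a : AP) (l : Fin n) : QF AP P n
  | not (φ : QF AP P n) : QF AP P n
  | and (φ ψ : QF AP P n) : QF AP P n
  | or (φ ψ : QF AP P n) : QF AP P n
  | dia (α : Pg AP P n) (φ : QF AP P n) : QF AP P n
  | box (α : Pg AP P n) (φ : QF AP P n) : QF AP P n
  | delta (α : Pg AP P n) : QF AP P n

/-- Programs of HyperPDL-Δ (with `none` as the wildcard coordinate). -/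
inductive Pg (AP P : Type) (n : ℕ) : Type
  | atom (t : Fin n → Option P) : Pg AP P n
  | eps : Pg AP P n
  | sum (a b : Pg AP P n) : Pg AP P n
  | seq (a b : Pg AP P n) : Pg AP P n
  | star (a : Pg AP P n) : Pg AP P n
  | test (φ : QF AP P n) : Pg AP P n
end

mutual
/-- Satisfaction of a quantifier-free formula by a trace assignment. -/
def QF.Sat {AP P : Type} {n : ℕ} : QF AP P n → (Fin n → Trace AP P) → Prop
  | .atom a l, Pa => a ∈ (Pa l).lab 0
  | .not φ, Pa => ¬ φ.Sat Pa
  | .and φ ψ, Pa => φ.Sat Pa ∧ ψ.Sat Pa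
  | .or φ ψ, Pa => φ.Sat Pa ∨ ψ.Sat Pa
  | .dia α φ, Pa => ∃ j, α.Rel Pa 0 j ∧ φ.Sat (TAdrop Pa j)
  | .box α φ, Pa => ∀ j, α.Rel Pa 0 j → φ.Sat (TAdrop Pa j)
  | .delta α, Pa => ∃ k : ℕ → ℕ, k 0 = 0 ∧ (∀ i, k i ≤ k (i + 1)) ∧
      ∀ i, α.Rel Pa (k i) (k (i + 1))

/-- The relation `(Π, i, k) ∈ R(α)` (indices count steps). -/
def Pg.Rel {AP P : Type} {n : ℕ} : Pg AP P n → (Fin n → Trace AP P) → ℕ → ℕ → Prop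
  | .atom t, Pa, i, k => k = i + 1 ∧ ∀ l, t l = none ∨ t l = some ((Pa l).act i)
  | .eps, _, i, k => i = k
  | .sum a b, Pa, i, k => a.Rel Pa i k ∨ b.Rel Pa i k
  | .seq a b, Pa, i, k => ∃ j, i ≤ j ∧ j ≤ k ∧ a.Rel Pa i j ∧ b.Rel Pa j k
  | .star a, Pa, i, k => ∃ (m : ℕ) (js : Fin (m + 1) → ℕ), js 0 = i ∧ js (Fin.last m) = k ∧
      ∀ l : Fin m, js l.castSucc ≤ js l.succ ∧ a.Rel Pa (js l.castSucc) (js l.succ)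
  | .test φ, Pa, i, k => i = k ∧ φ.Sat (TAdrop Pa i)
end

/-- A nondeterministic Büchi automaton. -/
structure NBA (A : Type) where
  Q : Type
  fin : Fintype Q
  q0 : Q
  δ : Q → A → Set Q
  F : Set Q

/-- The ω-language of an NBA. -/
def NBA.Lang {A : Type} (M : NBA A) : Set (ℕ → A) :=
  {w | ∃ r : ℕ → M.Q, r 0 = M.q0 ∧ (∀ k, r (k + 1) ∈ M.δ (r k) (w k)) ∧
    ∀ N, ∃ k ≥ N, r k ∈ M.F}

/-- The ω-word over `(2^{AP})ⁿ × Σⁿ` induced by a trace assignment, zipping the labels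
and atomic programs of all `n` traces. -/
def nuAP {AP P : Type} {n : ℕ} (Pa : Fin n → Trace AP P) :
    ℕ → (Fin n → Set AP) × (Fin n → P) :=
  fun k => (fun l => (Pa l).lab k, fun l => (Pa l).act k)

namespace HypAux
attribute [local instance] Classical.propDecidable

variable {AP P : Type} {n : ℕ}

def QTrue : QF AP P n := .delta .eps

lemma QTrue_sat (Pa : Fin n → Trace AP P) : (QTrue (AP := AP) (P := P) (n := n)).Sat Pa := by
  refine ⟨fun _ => 0, rfl, fun _ => le_rfl, fun _ => rfl⟩

def andL : List (QF AP P n) → QF AP P n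
  | [] => QTrue
  | ψ :: t => .and ψ (andL t)

lemma andL_sat (L : List (QF AP P n)) (Pa : Fin n → Trace AP P) :
    (andL L).Sat Pa ↔ ∀ ψ ∈ L, ψ.Sat Pa := by
  induction L with
  | nil => simpa [andL] using QTrue_sat Pa
  | cons ψ t ih => simp [andL, QF.Sat, ih]

def orL : List (QF AP P n) → QF AP P n
  | [] => .not QTrue
  | ψ :: t => .or ψ (orL t)

lemma orL_sat (L : List (QF AP P n)) (Pa : Fin n → Trace AP P) :
    (orL L).Sat Pa ↔ ∃ ψ ∈ L, ψ.Sat Pa := by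
  induction L with
  | nil => simp [orL, QF.Sat]; exact QTrue_sat Pa
  | cons ψ t ih => simp [orL, QF.Sat, ih]

def sumL : List (Pg AP P n) → Pg AP P n
  | [] => .test (.not QTrue)
  | a :: t => .sum a (sumL t)

lemma sumL_rel (L : List (Pg AP P n)) (Pa : Fin n → Trace AP P) (i k : ℕ) :
    (sumL L).Rel Pa i k ↔ ∃ a ∈ L, a.Rel Pa i k := by
  induction L with
  | nil =>
    simp only [sumL, Pg.Rel, QF.Sat, List.not_mem_nil, false_and, exists_false, iff_false,
      not_and, not_not]
    exact fun _ => ⟨fun _ => 0, rfl, fun _ => le_rfl, fun _ => rfl⟩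
  | cons a t ih => simp [sumL, Pg.Rel, ih]

end HypAux

namespace HypAux
attribute [local instance] Classical.propDecidable
variable {AP P : Type} {n : ℕ}

abbrev Letter (AP P : Type) (n : ℕ) := (Fin n → Set AP) × (Fin n → P)

lemma TAdrop_lab (Pa : Fin n → Trace AP P) (j m : ℕ) (l : Fin n) :
    ((TAdrop Pa j) l).lab m = (Pa l).lab (j + m) := rfl

lemma nuAP_TAdrop (Pa : Fin n → Trace AP P) (j m : ℕ) :
    nuAP (TAdrop Pa j) m = nuAP Pa (j + m) := rfl

noncomputable def labelTest [Fintype AP] (S : Fin n → Set AP) : QF AP P n :=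
  andL ((List.finRange n).flatMap fun l => (Finset.univ : Finset AP).toList.map fun a =>
    if a ∈ S l then .atom a l else .not (.atom a l))

lemma labelTest_sat [Fintype AP] (S : Fin n → Set AP) (Pa : Fin n → Trace AP P) :
    (labelTest (P := P) S).Sat Pa ↔ ∀ l, (Pa l).lab 0 = S l := by
  rw [labelTest, andL_sat]
  constructor
  · intro H l
    ext a
    have := H (if a ∈ S l then .atom a l else .not (.atom a l)) (by
      simp only [List.mem_flatMap, List.mem_map]
      exact ⟨l, List.mem_finRange l, a, by simp, rfl⟩)
    by_cases hm : a ∈ S l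
    · simp only [hm, if_true, QF.Sat] at this
      simp [hm, this]
    · simp only [hm, if_false, QF.Sat] at this
      simp [hm, this]
  · intro H ψ hψ
    simp only [List.mem_flatMap, List.mem_map] at hψ
    obtain ⟨l, -, a, -, rfl⟩ := hψ
    by_cases hm : a ∈ S l
    · simp only [hm, if_true, QF.Sat]
      rw [H l]; exact hm
    · simp only [hm, if_false, QF.Sat]
      rw [H l]; exact hm

noncomputable def letterPg [Fintype AP] (x : Letter AP P n) : Pg AP P n :=
  .seq (.test (labelTest x.1)) (.atom fun l => some (x.2 l))

lemma letterPg_rel [Fintype AP] (x : Letter AP P n) (Pa : Fin n → Trace AP P) (i k : ℕ) :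
    (letterPg x).Rel Pa i k ↔ k = i + 1 ∧ nuAP Pa i = x := by
  simp only [letterPg, Pg.Rel]
  constructor
  · rintro ⟨j, -, -, ⟨rfl, hlab⟩, rfl, hact⟩
    rw [labelTest_sat] at hlab
    refine ⟨rfl, ?_⟩
    have h1 : ∀ l, (Pa l).lab i = x.1 l := by
      intro l; have := hlab l; rwa [TAdrop_lab, Nat.add_zero] at this
    have h2 : ∀ l, (Pa l).act i = x.2 l := by
      intro l
      rcases hact l with h | h
      · exact absurd h (by simp)
      · exact (Option.some_injective _ h.symm)
    refine Prod.ext ?_ ?_ <;> funext l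
    · exact h1 l
    · exact h2 l
  · rintro ⟨rfl, hx⟩
    refine ⟨i, le_rfl, by omega, ⟨rfl, ?_⟩, rfl, fun l => Or.inr ?_⟩
    · rw [labelTest_sat]
      intro l; rw [TAdrop_lab, Nat.add_zero, ← hx]; rfl
    · rw [← hx]; rfl

end HypAux

namespace HypAux
attribute [local instance] Classical.propDecidable
variable {AP P : Type} {n : ℕ}

section NBAsec
variable [Fintype AP] [Fintype P] (M : NBA (Letter AP P n))

/-- One-step program from `p` to `q`. -/
noncomputable def trans (p q : M.Q) : Pg AP P n :=
  sumL (((Finset.univ : Finset (Letter AP P n)).toList.filter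
    fun x => decide (q ∈ M.δ p x)).map letterPg)

lemma trans_rel (p q : M.Q) (Pa : Fin n → Trace AP P) (i k : ℕ) :
    (trans M p q).Rel Pa i k ↔ k = i + 1 ∧ q ∈ M.δ p (nuAP Pa i) := by
  rw [trans, sumL_rel]
  constructor
  · rintro ⟨a, ha, hrel⟩
    simp only [List.mem_map, List.mem_filter, decide_eq_true_eq] at ha
    obtain ⟨x, ⟨-, hx⟩, rfl⟩ := ha
    rw [letterPg_rel] at hrel
    obtain ⟨rfl, hnu⟩ := hrel
    exact ⟨rfl, by rwa [hnu]⟩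
  · rintro ⟨rfl, hq⟩
    refine ⟨letterPg (nuAP Pa i), ?_, ?_⟩
    · simp only [List.mem_map, List.mem_filter, decide_eq_true_eq]
      exact ⟨nuAP Pa i, ⟨Finset.mem_toList.mpr (Finset.mem_univ _), hq⟩, rfl⟩
    · rw [letterPg_rel]; exact ⟨rfl, rfl⟩

/-- McNaughton–Yamada program: nonempty paths from `p` to `q` with intermediate
states in `al`. -/
noncomputable def mny : List M.Q → M.Q → M.Q → Pg AP P n
  | [], p, q => trans M p q
  | s :: t, p, q =>
      .sum (mny t p q) (.seq (mny t p s) (.seq (.star (mny t s s)) (mny t s q)))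

/-- `r` respects the transition relation on `[i, k)`. -/
def Seg (Pa : Fin n → Trace AP P) (r : ℕ → M.Q) (i k : ℕ) : Prop :=
  ∀ m, i ≤ m → m < k → r (m + 1) ∈ M.δ (r m) (nuAP Pa m)

/-- There is a run from `p` at `i` to `q` at `k` with all interior states in `al`. -/
def Good (Pa : Fin n → Trace AP P) (al : List M.Q) (p q : M.Q) (i k : ℕ) : Prop :=
  ∃ r : ℕ → M.Q, r i = p ∧ r k = q ∧ Seg M Pa r i k ∧
    ∀ m, i < m → m < k → r m ∈ al

variable {M}

lemma Good.mono {Pa : Fin n → Trace AP P} {al al' : List M.Q} {p q : M.Q} {i k : ℕ}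
    (hsub : ∀ x ∈ al, x ∈ al') (h : Good M Pa al p q i k) : Good M Pa al' p q i k := by
  obtain ⟨r, h1, h2, h3, h4⟩ := h
  exact ⟨r, h1, h2, h3, fun m hm hm' => hsub _ (h4 m hm hm')⟩

lemma Good.glue {Pa : Fin n → Trace AP P} {al : List M.Q} {p s q : M.Q} {i j k : ℕ}
    (hij : i ≤ j) (hjk : j ≤ k) (hmem : s ∈ al)
    (h1 : Good M Pa al p s i j) (h2 : Good M Pa al s q j k) :
    Good M Pa al p q i k := by
  obtain ⟨r1, e1, e2, sg1, int1⟩ := h1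
  obtain ⟨r2, f1, f2, sg2, int2⟩ := h2
  refine ⟨fun m => if m < j then r1 m else r2 m, ?_, ?_, ?_, ?_⟩
  · by_cases hi : i < j
    · simp [hi, e1]
    · have : i = j := le_antisymm hij (not_lt.mp hi)
      subst this
      simp [f1, ← e2, e1]
  · have : ¬ k < j := not_lt.mpr hjk
    simp [this, f2]
  · intro m hm hm'
    by_cases h : m + 1 < j
    · have hmj : m < j := by omega
      simp only [hmj, if_pos, h]
      exact sg1 m hm (by omega)
    · by_cases h' : m < j
      · have hj : m + 1 = j := by omega
        simp only [h', if_pos, h, if_neg]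
        have := sg1 m hm (by omega)
        rw [hj, f1, ← e2, ← hj]
        exact this
      · simp only [h', if_neg, show ¬ m + 1 < j by omega, if_neg]
        exact sg2 m (by omega) hm'
  · intro m hm hm'
    by_cases h : m < j
    · simpa [h] using int1 m hm h
    · by_cases h' : m = j
      · subst h'; simpa [f1] using hmem
      · simp only [h, if_neg]
        exact int2 m (by omega) hm'

/-- Star relation in terms of ℕ-indexed chains. -/
def ChainN (c : Pg AP P n) (Pa : Fin n → Trace AP P) (i k : ℕ) : Prop :=
  ∃ (m : ℕ) (g : ℕ → ℕ), g 0 = i ∧ g m = k ∧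
    ∀ l < m, g l ≤ g (l + 1) ∧ c.Rel Pa (g l) (g (l + 1))

lemma star_iff_chainN (c : Pg AP P n) (Pa : Fin n → Trace AP P) (i k : ℕ) :
    (Pg.star c).Rel Pa i k ↔ ChainN c Pa i k := by
  constructor
  · rintro ⟨m, js, h0, hl, hch⟩
    refine ⟨m, fun t => if h : t ≤ m then js ⟨t, by omega⟩ else i, ?_, ?_, ?_⟩
    · rw [← h0]
      simp only [dif_pos (Nat.zero_le m)]
      congr 1
    · rw [← hl]
      simp only [dif_pos (le_refl m)]
      congr 1
    · intro l hl'
      have := hch ⟨l, hl'⟩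
      have e1 : (⟨l, hl'⟩ : Fin m).castSucc = ⟨l, by omega⟩ := rfl
      have e2 : (⟨l, hl'⟩ : Fin m).succ = ⟨l + 1, by omega⟩ := rfl
      rw [e1, e2] at this
      simp only [dif_pos (show l ≤ m by omega), dif_pos (show l + 1 ≤ m by omega)]
      exact this
  · rintro ⟨m, g, h0, hm, hch⟩
    refine ⟨m, fun l => g l.val, ?_, ?_, ?_⟩
    · simpa using h0
    · simpa [Fin.last] using hm
    · intro l
      have := hch l.val l.isLt
      exact ⟨this.1, this.2⟩

lemma chainN_single {c : Pg AP P n} {Pa : Fin n → Trace AP P} {i k : ℕ}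
    (hik : i ≤ k) (h : c.Rel Pa i k) : ChainN c Pa i k := by
  refine ⟨1, fun t => if t = 0 then i else k, rfl, rfl, ?_⟩
  intro l hl
  interval_cases l
  simpa using ⟨hik, h⟩

lemma chainN_nil {c : Pg AP P n} {Pa : Fin n → Trace AP P} {i : ℕ} : ChainN c Pa i i :=
  ⟨0, fun _ => i, rfl, rfl, by omega⟩

lemma chainN_cons {c : Pg AP P n} {Pa : Fin n → Trace AP P} {i j k : ℕ}
    (hij : i ≤ j) (h : c.Rel Pa i j) (hc : ChainN c Pa j k) : ChainN c Pa i k := by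
  obtain ⟨m, g, h0, hm, hch⟩ := hc
  refine ⟨m + 1, fun t => if t = 0 then i else g (t - 1), rfl, by simp [hm], ?_⟩
  intro l hl
  rcases Nat.eq_zero_or_pos l with rfl | hpos
  · simpa [h0] using ⟨hij, h⟩
  · have := hch (l - 1) (by omega)
    have e1 : l - 1 + 1 = l := by omega
    rw [e1] at this
    simpa [Nat.pos_iff_ne_zero.mp hpos, show l + 1 - 1 = l by omega] using this

end NBAsec
end HypAux

namespace HypAux
attribute [local instance] Classical.propDecidable
variable {AP P : Type} {n : ℕ}

section NBAsec2
variable [Fintype AP] [Fintype P] {M : NBA (Letter AP P n)}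

lemma mny_rel (al : List M.Q) (p q : M.Q) (Pa : Fin n → Trace AP P) (i k : ℕ) :
    (mny M al p q).Rel Pa i k ↔ (i < k ∧ Good M Pa al p q i k) := by
  induction al generalizing p q Pa i k with
  | nil =>
    rw [mny, trans_rel]
    constructor
    · rintro ⟨rfl, hq⟩
      refine ⟨by omega, fun m => if m ≤ i then p else q, by simp, by simp, ?_, by omega⟩
      intro m hm hm'
      have : m = i := by omega
      subst this
      simpa using hq
    · rintro ⟨hik, r, e1, e2, sg, int⟩
      have hk : k = i + 1 := by
        by_contra hne
        exact absurd (int (i + 1) (by omega) (by omega)) List.not_mem_nil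
      subst hk
      have := sg i le_rfl (by omega)
      rw [e1, e2] at this
      exact ⟨rfl, this⟩
  | cons s t ih =>
    -- star helpers
    have key1 : ∀ (Pa : Fin n → Trace AP P) (m : ℕ) (g : ℕ → ℕ) (i k : ℕ), g 0 = i → g m = k →
        (∀ l < m, g l ≤ g (l + 1) ∧ (mny M t s s).Rel Pa (g l) (g (l + 1))) →
        i ≤ k ∧ Good M Pa (s :: t) s s i k := by
      intro Pa m
      induction m with
      | zero =>
        intro g i k h0 hm _
        rw [h0] at hm
        subst hm
        exact ⟨le_rfl, fun _ => s, rfl, rfl, fun m hm hm' => by omega, fun m hm hm' => by omega⟩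
      | succ m ihm =>
        intro g i k h0 hm hch
        have hfirst := hch 0 (by omega)
        rw [h0] at hfirst
        have h1 : i < g 1 ∧ Good M Pa t s s i (g 1) := (ih s s Pa i (g 1)).mp hfirst.2
        have htail := ihm (fun l => g (l + 1)) (g 1) k rfl hm (fun l hl => hch (l + 1) (by omega))
        refine ⟨le_trans (le_of_lt h1.1) htail.1, ?_⟩
        exact Good.glue (le_of_lt h1.1) htail.1 List.mem_cons_self
          (h1.2.mono fun x hx => List.mem_cons_of_mem s hx) htail.2
    have key2 : ∀ (Pa : Fin n → Trace AP P) (d i k : ℕ), k - i = d → i ≤ k →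
        Good M Pa (s :: t) s s i k → ChainN (mny M t s s) Pa i k := by
      intro Pa d
      induction d using Nat.strong_induction_on with
      | _ d ihd =>
        intro i k hd hik hg
        rcases eq_or_lt_of_le hik with rfl | hlt
        · exact chainN_nil
        obtain ⟨r, e1, e2, sg, int⟩ := hg
        by_cases hex : ∃ m, i < m ∧ m < k ∧ r m = s
        · have hj := Nat.find_spec hex
          set j := Nat.find hex with hjdef
          obtain ⟨hj1, hj2, hj3⟩ := hj
          have piece1 : Good M Pa t s s i j := by
            refine ⟨r, e1, hj3, fun m hm hm' => sg m hm (by omega), ?_⟩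
            intro m hm hm'
            have hmem := int m hm (by omega)
            have hne : r m ≠ s := by
              intro hrm
              exact Nat.find_min hex hm' ⟨hm, by omega, hrm⟩
            rcases List.mem_cons.mp hmem with h | h
            · exact absurd h hne
            · exact h
          have hrel1 : (mny M t s s).Rel Pa i j := (ih s s Pa i j).mpr ⟨hj1, piece1⟩
          have tail : Good M Pa (s :: t) s s j k :=
            ⟨r, hj3, e2, fun m hm hm' => sg m (by omega) hm', fun m hm hm' => int m (by omega) hm'⟩
          have := ihd (k - j) (by omega) j k rfl (le_of_lt hj2) tail
          exact chainN_cons (le_of_lt hj1) hrel1 this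
        · push_neg at hex
          have hgood : Good M Pa t s s i k := by
            refine ⟨r, e1, e2, sg, ?_⟩
            intro m hm hm'
            rcases List.mem_cons.mp (int m hm hm') with h | h
            · exact absurd h (hex m hm hm')
            · exact h
          exact chainN_single hik ((ih s s Pa i k).mpr ⟨hlt, hgood⟩)
    rw [mny]
    show (mny M t p q).Rel Pa i k ∨ _ ↔ _
    constructor
    · rintro (h | ⟨j, hij, hjk, hB, j', hjj', hj'k, hstar, hD⟩)
      · obtain ⟨hik, hg⟩ := (ih p q Pa i k).mp h
        exact ⟨hik, hg.mono fun x hx => List.mem_cons_of_mem s hx⟩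
      · obtain ⟨hij', hgB⟩ := (ih p s Pa i j).mp hB
        have hks : j ≤ j' ∧ Good M Pa (s :: t) s s j j' := by
          obtain ⟨m, g, h0, hm, hch⟩ := (star_iff_chainN _ _ _ _).mp hstar
          exact key1 Pa m g j j' h0 hm hch
        obtain ⟨hc1, hgS⟩ := hks
        obtain ⟨hj'k', hgD⟩ := (ih s q Pa j' k).mp hD
        refine ⟨by omega, ?_⟩
        refine Good.glue hij (by omega) List.mem_cons_self
          (hgB.mono fun x hx => List.mem_cons_of_mem s hx) ?_
        exact Good.glue hc1 (le_of_lt hj'k') List.mem_cons_self hgS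
          (hgD.mono fun x hx => List.mem_cons_of_mem s hx)
    · rintro ⟨hik, r, e1, e2, sg, int⟩
      by_cases hex : ∃ m, i < m ∧ m < k ∧ r m = s
      · right
        have hj := Nat.find_spec hex
        set j1 := Nat.find hex with hj1def
        obtain ⟨ha1, ha2, ha3⟩ := hj
        set Q2 : ℕ → Prop := fun m => i < m ∧ m < k ∧ r m = s with hQ2
        set j2 := Nat.findGreatest Q2 k with hj2def
        have hPj2 : Q2 j2 := Nat.findGreatest_spec (le_of_lt ha2) ⟨ha1, ha2, ha3⟩
        obtain ⟨hb1, hb2, hb3⟩ := hPj2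
        have hles : j1 ≤ j2 := Nat.le_findGreatest (le_of_lt ha2) ⟨ha1, ha2, ha3⟩
        have hgB : Good M Pa t p s i j1 := by
          refine ⟨r, e1, ha3, fun m hm hm' => sg m hm (by omega), ?_⟩
          intro m hm hm'
          have hmem := int m hm (by omega)
          have hne : r m ≠ s := fun hrm => Nat.find_min hex hm' ⟨hm, by omega, hrm⟩
          rcases List.mem_cons.mp hmem with h | h
          · exact absurd h hne
          · exact h
        have hgS : Good M Pa (s :: t) s s j1 j2 :=
          ⟨r, ha3, hb3, fun m hm hm' => sg m (by omega) (by omega),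
            fun m hm hm' => int m (by omega) (by omega)⟩
        have hgD : Good M Pa t s q j2 k := by
          refine ⟨r, hb3, e2, fun m hm hm' => sg m (by omega) hm', ?_⟩
          intro m hm hm'
          have hmem := int m (by omega) hm'
          have hne : r m ≠ s := by
            intro hrm
            have hgt : Nat.findGreatest Q2 k < m := by rw [← hj2def]; omega
            exact Nat.findGreatest_is_greatest hgt (le_of_lt hm') ⟨by omega, hm', hrm⟩
          rcases List.mem_cons.mp hmem with h | h
          · exact absurd h hne
          · exact h
        refine ⟨j1, le_of_lt ha1, by omega, (ih p s Pa i j1).mpr ⟨ha1, hgB⟩,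
          j2, hles, le_of_lt hb2, ?_, (ih s q Pa j2 k).mpr ⟨hb2, hgD⟩⟩
        exact (star_iff_chainN _ _ _ _).mpr (key2 Pa (j2 - j1) j1 j2 rfl hles hgS)
      · left
        push_neg at hex
        refine (ih p q Pa i k).mpr ⟨hik, r, e1, e2, sg, ?_⟩
        intro m hm hm'
        rcases List.mem_cons.mp (int m hm hm') with h | h
        · exact absurd h (hex m hm hm')
        · exact h

end NBAsec2
end HypAux

/-- **HyperPDL-Δ expresses all ω-regular properties over trace assignments**: for every
ω-regular language `L` over `(2^{AP})ⁿ × Σⁿ` there is a quantifier-free HyperPDL-Δ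
formula `φ` with path variables `π₁, …, π_n` such that for every trace assignment `Π`,
`Π ⊨ φ` iff `ν_{AP}(Π) ∈ L`. -/
theorem omega_regular_expressible {AP P : Type} [Fintype AP] [Fintype P] {n : ℕ}
    (L : Set (ℕ → (Fin n → Set AP) × (Fin n → P)))
    (h : ∃ M : NBA ((Fin n → Set AP) × (Fin n → P)), M.Lang = L) :
    ∃ φ : QF AP P n, ∀ Pa : Fin n → Trace AP P, φ.Sat Pa ↔ nuAP Pa ∈ L := by
  classical
  open HypAux in
  obtain ⟨M, rfl⟩ := h
  haveI := M.fin
  set all : List M.Q := (Finset.univ : Finset M.Q).toList with hall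
  have hallmem : ∀ x : M.Q, x ∈ all := fun x => Finset.mem_toList.mpr (Finset.mem_univ x)
  refine ⟨HypAux.orL ((all.filter fun q => decide (q ∈ M.F)).map fun q =>
    QF.dia (HypAux.mny M all M.q0 q) (.delta (HypAux.mny M all q q))), ?_⟩
  intro Pa
  rw [HypAux.orL_sat]
  constructor
  · rintro ⟨ψ, hmem, hsat⟩
    simp only [List.mem_map, List.mem_filter, decide_eq_true_eq] at hmem
    obtain ⟨q, ⟨-, hqF⟩, rfl⟩ := hmem
    simp only [QF.Sat] at hsat
    obtain ⟨j, hrel, k, hk0, hkmono, hseg⟩ := hsat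
    rw [HypAux.mny_rel] at hrel
    obtain ⟨hj, r0, hr00, hr0j, hr0seg, -⟩ := hrel
    have hseg' := fun i => (HypAux.mny_rel all q q (TAdrop Pa j) (k i) (k (i+1))).mp (hseg i)
    have hklt : ∀ i, k i < k (i + 1) := fun i => (hseg' i).1
    choose ρ hρ1 hρ2 hρ3 hρ4 using fun i => (hseg' i).2
    clear hseg hseg' hρ4
    -- segment boundaries
    set b : ℕ → ℕ := fun i => if i = 0 then 0 else j + k (i - 1) with hb
    have hb0 : b 0 = 0 := rfl
    have hbS : ∀ i, b (i + 1) = j + k i := fun i => by simp [hb]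
    have hbmono : ∀ i, b i < b (i + 1) := by
      intro i
      rcases i with _ | i
      · rw [hb0, hbS, hk0]
        omega
      · rw [hbS, hbS]
        have := hklt i
        omega
    have hbsm : StrictMono b := strictMono_nat_of_lt_succ hbmono
    have hble : ∀ i, i ≤ b i := fun i => hbsm.le_apply
    -- segment runs
    set Rg : ℕ → ℕ → M.Q := fun i => if i = 0 then r0 else fun m => ρ (i - 1) (m - j) with hRg
    have E0 : Rg 0 0 = M.q0 := hr00
    have E1 : ∀ i, Rg i (b (i + 1)) = q := by
      intro i
      rcases Nat.eq_zero_or_pos i with rfl | hpos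
      · show r0 (j + k 0) = q
        rw [hk0, Nat.add_zero]; exact hr0j
      · have hi : i ≠ 0 := by omega
        show (if i = 0 then r0 else fun m => ρ (i - 1) (m - j)) (b (i + 1)) = q
        simp only [hi, if_neg]
        show ρ (i - 1) (b (i + 1) - j) = q
        have : b (i + 1) = j + k i := by simp [hb]
        rw [this, Nat.add_sub_cancel_left]
        have : i - 1 + 1 = i := by omega
        rw [← this] at *
        exact hρ2 (i - 1)
    have E2 : ∀ i, Rg (i + 1) (b (i + 1)) = q := by
      intro i
      show ρ i (b (i + 1) - j) = q
      have : b (i + 1) = j + k i := by simp [hb]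
      rw [this, Nat.add_sub_cancel_left]
      exact hρ1 i
    have Etr : ∀ i m, b i ≤ m → m < b (i + 1) → Rg i (m + 1) ∈ M.δ (Rg i m) (nuAP Pa m) := by
      intro i m hm hm'
      rcases Nat.eq_zero_or_pos i with rfl | hpos
      · have hmj : m < j := by
          have : b 1 = j + k 0 := by simp [hb]
          rw [this, hk0] at hm'; omega
        exact hr0seg m (Nat.zero_le m) hmj
      · have hi : i ≠ 0 := by omega
        have hbi : b i = j + k (i - 1) := by simp [hb, hi]
        have hbi1 : b (i + 1) = j + k i := by simp [hb]
        have hRgi : ∀ x, Rg i x = ρ (i - 1) (x - j) := fun x => by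
          show (if i = 0 then r0 else fun m => ρ (i - 1) (m - j)) x = _
          rw [if_neg hi]
        rw [hRgi, hRgi]
        have hjm : j ≤ m := by omega
        have e : m + 1 - j = (m - j) + 1 := by omega
        rw [e]
        have := hρ3 (i - 1) (m - j) (by omega) (by
          have : i - 1 + 1 = i := by omega
          rw [this]; omega)
        rwa [HypAux.nuAP_TAdrop, Nat.add_sub_cancel' hjm] at this
    set c : ℕ → ℕ := fun m => Nat.findGreatest (fun i => b i ≤ m) m with hc
    have hc1 : ∀ m, b (c m) ≤ m := fun m =>
      Nat.findGreatest_spec (P := fun i => b i ≤ m) (Nat.zero_le m)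
        (by show b 0 ≤ m; rw [hb0]; exact Nat.zero_le m)
    have hc2 : ∀ m, m < b (c m + 1) := by
      intro m
      by_contra hcon
      push_neg at hcon
      exact Nat.findGreatest_is_greatest (P := fun i => b i ≤ m) (Nat.lt_succ_self _)
        (le_trans (hble _) hcon) hcon
    have hcb : ∀ i, c (b i) = i := by
      intro i
      refine le_antisymm ?_ (Nat.le_findGreatest (P := fun x => b x ≤ b i) (hble i) le_rfl)
      have := hc1 (b i)
      exact (hbsm.le_iff_le).mp this
    refine ⟨fun m => Rg (c m) m, ?_, ?_, ?_⟩
    · have : c 0 = 0 := by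
        have h1 := hc1 0
        have h2 := hble (c 0)
        omega
      show Rg (c 0) 0 = M.q0
      rw [this]; exact E0
    · intro m
      have hi1 := hc1 m
      have hi2 := hc2 m
      have ht := Etr (c m) m hi1 hi2
      have hcmle := hble (c m)
      have hR1 : Rg (c (m + 1)) (m + 1) = Rg (c m) (m + 1) := by
        by_cases hcase : m + 1 < b (c m + 1)
        · have : c (m + 1) = c m := by
            refine le_antisymm ?_
              (Nat.le_findGreatest (P := fun i => b i ≤ m + 1) (by omega) (by omega))
            have h1 := hc1 (m + 1)
            have h2 : b (c (m + 1)) < b (c m + 1) := by omega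
            have := (hbsm.lt_iff_lt).mp h2
            omega
          rw [this]
        · have heq : m + 1 = b (c m + 1) := by omega
          rw [heq, hcb, E2, E1]
      show Rg (c (m + 1)) (m + 1) ∈ M.δ (Rg (c m) m) (nuAP Pa m)
      rw [hR1]
      exact ht
    · intro N
      refine ⟨b (N + 1), le_trans (by omega) (hble (N + 1)), ?_⟩
      show Rg (c (b (N + 1))) (b (N + 1)) ∈ M.F
      rw [hcb (N + 1), E2 N]
      exact hqF
  · intro hw
    obtain ⟨r, hr0, htr, hacc⟩ := hw
    have hq : ∃ q, q ∈ M.F ∧ ∀ N, ∃ m ≥ N, r m = q := by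
      by_contra hno
      push_neg at hno
      choose Nf hNf using hno
      obtain ⟨m, hm, hmF⟩ :=
        hacc (Finset.univ.sup fun q => if hq : q ∈ M.F then Nf q hq else 0)
      have hle : (if hq : r m ∈ M.F then Nf (r m) hq else 0) ≤
          Finset.univ.sup fun q => if hq : q ∈ M.F then Nf q hq else 0 :=
        Finset.le_sup (f := fun q => if hq : q ∈ M.F then Nf q hq else 0)
          (Finset.mem_univ (r m))
      rw [dif_pos hmF] at hle
      exact hNf (r m) hmF m (le_trans hle hm) rfl
    obtain ⟨q, hqF, hq⟩ := hq
    have hstep : ∀ N, ∃ m, N < m ∧ r m = q := by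
      intro N
      obtain ⟨m, hm, he⟩ := hq (N + 1)
      exact ⟨m, by omega, he⟩
    choose f hf1 hf2 using hstep
    set tt : ℕ → ℕ := fun i => f^[i + 1] 0 with htt
    have httsucc : ∀ i, tt (i + 1) = f (tt i) := by
      intro i
      show f^[i + 1 + 1] 0 = f (f^[i + 1] 0)
      exact Function.iterate_succ_apply' f (i + 1) 0
    have htt1 : ∀ i, tt i < tt (i + 1) := fun i => by rw [httsucc]; exact hf1 _
    have httsm : StrictMono tt := strictMono_nat_of_lt_succ htt1
    have htt0 : 1 ≤ tt 0 := by
      show 1 ≤ f^[1] 0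
      rw [Function.iterate_one]
      exact hf1 0
    have httq : ∀ i, r (tt i) = q := by
      intro i
      show r (f^[i + 1] 0) = q
      rw [Function.iterate_succ_apply']
      exact hf2 _
    refine ⟨QF.dia (HypAux.mny M all M.q0 q) (.delta (HypAux.mny M all q q)), ?_, ?_⟩
    · simp only [List.mem_map, List.mem_filter, decide_eq_true_eq]
      exact ⟨q, ⟨hallmem q, hqF⟩, rfl⟩
    · simp only [QF.Sat]
      refine ⟨tt 0, ?_, ?_⟩
      · rw [HypAux.mny_rel]
        exact ⟨by omega, r, hr0, httq 0, fun m _ _ => htr m, fun m _ _ => hallmem _⟩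
      · refine ⟨fun i => tt i - tt 0, by simp, ?_, ?_⟩
        · intro i
          show tt i - tt 0 ≤ tt (i + 1) - tt 0
          have := htt1 i
          omega
        · intro i
          have hle0 : tt 0 ≤ tt i := httsm.monotone (Nat.zero_le i)
          have hle1 : tt 0 ≤ tt (i + 1) := httsm.monotone (Nat.zero_le _)
          have hlt := htt1 i
          show (HypAux.mny M all q q).Rel (TAdrop Pa (tt 0)) (tt i - tt 0) (tt (i + 1) - tt 0)
          rw [HypAux.mny_rel]
          refine ⟨by omega, fun m => r (tt 0 + m), ?_, ?_, ?_,
            fun m _ _ => hallmem _⟩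
          · show r (tt 0 + (tt i - tt 0)) = q
            rw [Nat.add_sub_cancel' hle0]; exact httq i
          · show r (tt 0 + (tt (i + 1) - tt 0)) = q
            rw [Nat.add_sub_cancel' hle1]; exact httq (i + 1)
          · intro m hm hm'
            show r (tt 0 + (m + 1)) ∈ M.δ (r (tt 0 + m)) (nuAP (TAdrop Pa (tt 0)) m)
            rw [HypAux.nuAP_TAdrop]
            have e : tt 0 + (m + 1) = (tt 0 + m) + 1 := by omega
            rw [e]
            exact htr (tt 0 + m)
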